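/- Among the 24 permutations of the 4-element set W_2^2, exactly 8 satisfy the diagonal condition, and exactly 4 satisfy both the diagonal condition and the annihilation condition. -/

import Mathlib

/-- For a permutation `σ` of words of length `k+1` over the alphabet `Fin n`, and a letter `i`,
`fword σ i α` is the word `β` of length `k` such that `σ (β.m) = i.α` for some letter `m`,
i.e. the first `k` letters of `σ⁻¹ (i.α)`.  (The map `f_i^σ` of the paper.) -/
def fword {n k : ℕ} (σ : Equiv.Perm (Fin (k + 1) → Fin n)) (i : Fin n)
    (α : Fin k → Fin n) : Fin k → Fin n :=
  Fin.init (σ.symm (Fin.cons i α))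

/-- The sets `Σ_m` associated to a family of maps `f_i : X → X`. -/
def SigmaSet {X : Type*} {n : ℕ} (f : Fin n → X → X) : ℕ → Set (X × X)
  | 0 => {p | p.1 = p.2}
  | m + 1 => SigmaSet f m ∪ {p | ∀ i, (f i p.1, f i p.2) ∈ SigmaSet f m}

/-- The diagonal condition: `⋃ m, Σ_m = X × X` for the family `f_i^σ`. -/
def diagCond {n k : ℕ} (σ : Equiv.Perm (Fin (k + 1) → Fin n)) : Prop :=
  (⋃ m, SigmaSet (fword σ) m) = Set.univ

/-- The set `𝒲`: off-diagonal pairs of words of length `k`, together with a point `†` (`none`). -/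
def OffDiag (n k : ℕ) := Option {q : (Fin k → Fin n) × (Fin k → Fin n) // q.1 ≠ q.2}

/-- The map `f_{ij}^σ` on `𝒲`: it sends `(α,β)` to `(γ,δ)` if `σ(γm) = iα` and `σ(δm) = jβ`
for some letter `m`, and to `†` otherwise; `†` is fixed. -/
def fpair {n k : ℕ} (σ : Equiv.Perm (Fin (k + 1) → Fin n)) (i j : Fin n) :
    OffDiag n k → OffDiag n k
  | none => none
  | some ⟨(α, β), _⟩ =>
      if h : (σ.symm (Fin.cons i α)) (Fin.last k) = (σ.symm (Fin.cons j β)) (Fin.last k) ∧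
          Fin.init (σ.symm (Fin.cons i α)) ≠ Fin.init (σ.symm (Fin.cons j β)) then
        some ⟨(Fin.init (σ.symm (Fin.cons i α)), Fin.init (σ.symm (Fin.cons j β))), h.2⟩
      else none

/-- The sets `Ψ_m` associated to a family of maps `g_j : Y → Y` and a point `†`. -/
def PsiSet {Y ι : Type*} (dag : Y) (g : ι → Y → Y) : ℕ → Set Y
  | 0 => {dag}
  | m + 1 => {dag} ∪ {y | ∀ j, g j y ∈ PsiSet dag g m}

/-- The annihilation condition: `⋃ m, Ψ_m = 𝒲` for the family `f_{ij}^σ`. -/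
def annCond {n k : ℕ} (σ : Equiv.Perm (Fin (k + 1) → Fin n)) : Prop :=
  (⋃ m, PsiSet (none : OffDiag n k) (fun ij : Fin n × Fin n => fpair σ ij.1 ij.2) m) = Set.univ


/-! ### Auxiliary material for the proof -/

/-- Generic stabilization lemma: a monotone chain of sets in a finite type which is
"step-determined" stabilizes by step `N + 1` whenever `Nat.card X ≤ N`. -/
lemma chain_stab {X : Type*} [Finite X] (S : ℕ → Set X) (N : ℕ)
    (hN : Nat.card X ≤ N)
    (hmono : ∀ m, S m ⊆ S (m + 1))
    (hstep : ∀ m, S m = S (m + 1) → S (m + 1) = S (m + 2)) :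
    (⋃ m, S m) = S (N + 1) := by
  have hfin : ∀ m, (S m).Finite := fun m => Set.toFinite _
  have claim : ∀ m, m ≤ (S m).ncard ∨ S m = S (m + 1) := by
    intro m
    induction m with
    | zero => exact Or.inl (Nat.zero_le _)
    | succ m ih =>
      rcases ih with h | h
      · by_cases he : S m = S (m + 1)
        · exact Or.inr (hstep m he)
        · left
          have hss : S m ⊂ S (m + 1) := ⟨hmono m, fun h2 => he (subset_antisymm (hmono m) h2)⟩
          have := Set.ncard_lt_ncard hss (hfin (m + 1))
          omega
      · exact Or.inr (hstep m h)
  have hbig : S (N + 1) = S (N + 2) := by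
    rcases claim (N + 1) with h | h
    · exfalso
      have h1 : (S (N + 1)).ncard ≤ Nat.card X := by
        have := Set.ncard_le_ncard (Set.subset_univ (S (N + 1))) Set.finite_univ
        simpa [Set.ncard_univ] using this
      omega
    · exact h
  have eq2 : ∀ k, S (N + 1 + k) = S (N + 2 + k) := by
    intro k
    induction k with
    | zero => exact hbig
    | succ k ih =>
      have ih' : S (N + 1 + k) = S (N + 1 + k + 1) := by
        rw [show N + 1 + k + 1 = N + 2 + k by omega]; exact ih
      have := hstep (N + 1 + k) ih'
      rw [show N + 1 + (k+1) = N + 1 + k + 1 by omega, show N + 2 + (k+1) = N + 1 + k + 2 by omega]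
      exact this
  have key : ∀ k, S (N + 1 + k) = S (N + 1) := by
    intro k
    induction k with
    | zero => rfl
    | succ k ih =>
      have h2 := (eq2 k).symm
      rw [show N + 1 + (k + 1) = N + 2 + k by omega, h2, ih]
  apply subset_antisymm
  · apply Set.iUnion_subset
    intro m
    rcases le_or_gt m (N + 1) with h | h
    · exact (monotone_nat_of_le_succ hmono) h
    · obtain ⟨k, hk⟩ := Nat.exists_eq_add_of_le h.le
      rw [hk, key k]
  · exact Set.subset_iUnion S (N + 1)

lemma sigma_mono {X : Type*} {n : ℕ} (f : Fin n → X → X) (m : ℕ) :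
    SigmaSet f m ⊆ SigmaSet f (m + 1) :=
  Set.subset_union_left

lemma sigma_step {X : Type*} {n : ℕ} (f : Fin n → X → X) (m : ℕ)
    (h : SigmaSet f m = SigmaSet f (m + 1)) :
    SigmaSet f (m + 1) = SigmaSet f (m + 2) := by
  apply subset_antisymm (sigma_mono f (m + 1))
  intro p hp
  rcases hp with hp | hp
  · exact hp
  · right
    intro i
    have := hp i
    rw [← h] at this
    exact this

lemma psi_mono {Y ι : Type*} (dag : Y) (g : ι → Y → Y) (m : ℕ) :
    PsiSet dag g m ⊆ PsiSet dag g (m + 1) := by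
  induction m with
  | zero => exact Set.subset_union_left
  | succ m ih =>
    intro y hy
    rcases hy with hy | hy
    · exact Or.inl hy
    · exact Or.inr fun j => ih (hy j)

lemma psi_step {Y ι : Type*} (dag : Y) (g : ι → Y → Y) (m : ℕ)
    (h : PsiSet dag g m = PsiSet dag g (m + 1)) :
    PsiSet dag g (m + 1) = PsiSet dag g (m + 2) := by
  show PsiSet dag g (m + 1) = {dag} ∪ {y | ∀ j, g j y ∈ PsiSet dag g (m + 1)}
  rw [← h]
  exact h

instance {n k : ℕ} : DecidableEq (OffDiag n k) :=
  inferInstanceAs (DecidableEq (Option _))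

instance {n k : ℕ} : Fintype (OffDiag n k) :=
  inferInstanceAs (Fintype (Option {q : (Fin k → Fin n) × (Fin k → Fin n) // q.1 ≠ q.2}))

def decSigma {X : Type*} [DecidableEq X] {n : ℕ} (f : Fin n → X → X) :
    ∀ (m : ℕ) (p : X × X), Decidable (p ∈ SigmaSet f m)
  | 0, p => decidable_of_iff (p.1 = p.2) Iff.rfl
  | m + 1, p =>
    letI : ∀ q : X × X, Decidable (q ∈ SigmaSet f m) := decSigma f m
    decidable_of_iff (p ∈ SigmaSet f m ∨ ∀ i, (f i p.1, f i p.2) ∈ SigmaSet f m) Iff.rfl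

instance {X : Type*} [DecidableEq X] {n : ℕ} (f : Fin n → X → X) (m : ℕ) (p : X × X) :
    Decidable (p ∈ SigmaSet f m) := decSigma f m p

instance {X : Type*} [DecidableEq X] {n : ℕ} (f : Fin n → X → X) (m : ℕ) :
    DecidablePred (· ∈ SigmaSet f m) := decSigma f m

def decPsi {Y ι : Type*} [DecidableEq Y] [Fintype ι] (dag : Y) (g : ι → Y → Y) :
    ∀ (m : ℕ) (y : Y), Decidable (y ∈ PsiSet dag g m)
  | 0, y => decidable_of_iff (y = dag) Iff.rfl
  | m + 1, y =>
    letI : ∀ z : Y, Decidable (z ∈ PsiSet dag g m) := decPsi dag g m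
    decidable_of_iff (y = dag ∨ ∀ j, g j y ∈ PsiSet dag g m) Iff.rfl

instance {Y ι : Type*} [DecidableEq Y] [Fintype ι] (dag : Y) (g : ι → Y → Y) (m : ℕ) (y : Y) :
    Decidable (y ∈ PsiSet dag g m) := decPsi dag g m y

instance {Y ι : Type*} [DecidableEq Y] [Fintype ι] (dag : Y) (g : ι → Y → Y) (m : ℕ) :
    DecidablePred (· ∈ PsiSet dag g m) := decPsi dag g m

/-- Decidable version of the diagonal condition. -/
def diagD (σ : Equiv.Perm (Fin (1 + 1) → Fin 2)) : Prop :=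
  ∀ p : (Fin 1 → Fin 2) × (Fin 1 → Fin 2), p ∈ SigmaSet (fword σ) 5

/-- Decidable version of the annihilation condition. -/
def annD (σ : Equiv.Perm (Fin (1 + 1) → Fin 2)) : Prop :=
  ∀ y : OffDiag 2 1,
    y ∈ PsiSet (none : OffDiag 2 1) (fun ij : Fin 2 × Fin 2 => fpair σ ij.1 ij.2) 5

instance (σ : Equiv.Perm (Fin (1 + 1) → Fin 2)) : Decidable (diagD σ) := by
  unfold diagD; infer_instance

instance (σ : Equiv.Perm (Fin (1 + 1) → Fin 2)) : Decidable (annD σ) :=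
  @Fintype.decidableForallFintype (OffDiag 2 1) _ (fun y => decPsi _ _ 5 y) _

lemma diag_iff (σ : Equiv.Perm (Fin (1 + 1) → Fin 2)) : diagCond σ ↔ diagD σ := by
  unfold diagCond diagD
  rw [chain_stab _ 4 (by rw [Nat.card_eq_fintype_card]; decide)
    (sigma_mono _) (sigma_step _), Set.eq_univ_iff_forall]

lemma ann_iff (σ : Equiv.Perm (Fin (1 + 1) → Fin 2)) : annCond σ ↔ annD σ := by
  unfold annCond annD
  rw [chain_stab (PsiSet (none : OffDiag 2 1) (fun ij : Fin 2 × Fin 2 => fpair σ ij.1 ij.2)) 4 (by rw [Nat.card_eq_fintype_card]; decide)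
    (psi_mono _ _) (psi_step _ _), Set.eq_univ_iff_forall]
  exact Iff.rfl

theorem stmt_9 :
    Nat.card {σ : Equiv.Perm (Fin (1 + 1) → Fin 2) // diagCond σ} = 8 ∧
    Nat.card {σ : Equiv.Perm (Fin (1 + 1) → Fin 2) // diagCond σ ∧ annCond σ} = 4 := by
  constructor
  · rw [Nat.card_congr (Equiv.subtypeEquivRight diag_iff), Nat.card_eq_fintype_card]
    decide
  · rw [Nat.card_congr (Equiv.subtypeEquivRight
      (fun σ => and_congr (diag_iff σ) (ann_iff σ))), Nat.card_eq_fintype_card]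
    set_option maxRecDepth 10000 in decide
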